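/- Let G = (V,E) be a finite simple 2-connected graph that has at most one vertex of degree 2. Then there exists an edge e = {a,b} ∈ E such that both the edge-deleted graph G∖e and the contracted graph G/e are 2-connected, where G/e is the simple graph on vertex set V∖{b} in which distinct vertices x,y are adjacent if and only if x and y are adjacent in G, or x = a and y is adjacent to b in G, or y = a and x is adjacent to b in G. -/

import Mathlib

/-- A graph is 2-connected if it has at least 3 vertices and remains connected after
deleting any single vertex. -/
def TwoConnectedGraph {V : Type*} (G : SimpleGraph V) : Prop :=
  3 ≤ Nat.card V ∧ ∀ u : V, (G.induce {x : V | x ≠ u}).Connected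

/-- The contraction `G/e` of the edge `e = {a,b}`: the simple graph on `V ∖ {b}` where
distinct `x, y` are adjacent iff they are adjacent in `G`, or `x = a` and `y` is
adjacent to `b` in `G`, or `y = a` and `x` is adjacent to `b` in `G`. -/
def contractEdge {V : Type*} (G : SimpleGraph V) (a b : V) :
    SimpleGraph {x : V // x ≠ b} where
  Adj x y := x ≠ y ∧ (G.Adj x y ∨ ((x : V) = a ∧ G.Adj y b) ∨ ((y : V) = a ∧ G.Adj x b))
  symm := ⟨by
    rintro x y ⟨h1, h2⟩
    refine ⟨h1.symm, ?_⟩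
    rcases h2 with h | ⟨hx, hy⟩ | ⟨hy, hx⟩
    · exact Or.inl h.symm
    · exact Or.inr (Or.inr ⟨hx, hy⟩)
    · exact Or.inr (Or.inl ⟨hy, hx⟩)⟩
  loopless := ⟨fun x h => h.1 rfl⟩



open SimpleGraph

section Infra
variable {V : Type*} {V' : Type*}

/-- Reachability inside a vertex set. -/
def ReachIn (H : SimpleGraph V) (s : Set V) (x y : V) : Prop :=
  ∃ w : H.Walk x y, ∀ z ∈ w.support, z ∈ s

/-- Connectivity of the induced subgraph, phrased with walks in the ambient graph. -/
def WConn (H : SimpleGraph V) (s : Set V) : Prop :=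
  s.Nonempty ∧ ∀ x ∈ s, ∀ y ∈ s, ReachIn H s x y

namespace ReachIn

variable {H : SimpleGraph V} {s t : Set V} {x y z : V}

lemma mem_left (h : ReachIn H s x y) : x ∈ s := by
  obtain ⟨w, hw⟩ := h; exact hw x w.start_mem_support

lemma mem_right (h : ReachIn H s x y) : y ∈ s := by
  obtain ⟨w, hw⟩ := h; exact hw y w.end_mem_support

lemma refl (hx : x ∈ s) : ReachIn H s x x :=
  ⟨SimpleGraph.Walk.nil, by simp [hx]⟩

lemma symm (h : ReachIn H s x y) : ReachIn H s y x := by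
  obtain ⟨w, hw⟩ := h
  exact ⟨w.reverse, by simpa using hw⟩

lemma trans (h : ReachIn H s x y) (h' : ReachIn H s y z) : ReachIn H s x z := by
  obtain ⟨w, hw⟩ := h; obtain ⟨w', hw'⟩ := h'
  refine ⟨w.append w', fun u hu => ?_⟩
  rcases (SimpleGraph.Walk.mem_support_append_iff _ _).mp hu with h | h
  · exact hw u h
  · exact hw' u h

lemma adj (h : H.Adj x y) (hx : x ∈ s) (hy : y ∈ s) : ReachIn H s x y :=
  ⟨SimpleGraph.Walk.cons h SimpleGraph.Walk.nil, by
    intro z hz; simp only [SimpleGraph.Walk.support_cons, SimpleGraph.Walk.support_nil,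
      List.mem_cons, List.mem_singleton] at hz
    rcases hz with rfl | rfl | h; exact hx; exact hy; simp at h⟩

lemma mono (hst : s ⊆ t) (h : ReachIn H s x y) : ReachIn H t x y := by
  obtain ⟨w, hw⟩ := h; exact ⟨w, fun z hz => hst (hw z hz)⟩

end ReachIn

/-- Transfer a confined walk along a vertex map. -/
lemma reachIn_transfer {H : SimpleGraph V} {H' : SimpleGraph V'} {s : Set V} {t : Set V'}
    (f : V → V')
    (hadj : ∀ c d, H.Adj c d → c ∈ s → d ∈ s → f c = f d ∨ H'.Adj (f c) (f d))
    (hmem : ∀ z ∈ s, f z ∈ t) :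
    ∀ {x y}, ReachIn H s x y → ReachIn H' t (f x) (f y) := by
  have key : ∀ x y (w : H.Walk x y), (∀ z ∈ w.support, z ∈ s) →
      ReachIn H' t (f x) (f y) := by
    intro x y w
    induction w with
    | nil => exact fun hw => ReachIn.refl (hmem _ (hw _ (by simp)))
    | @cons u c v hstep p ih =>
      intro hw
      have hu : u ∈ s := hw u (by simp)
      have hc : c ∈ s := hw c (by simp)
      have h2 : ReachIn H' t (f c) (f v) := ih (fun z hz => hw z (by simp [hz]))
      rcases hadj u c hstep hu hc with heq | hadj'
      · exact heq ▸ h2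
      · exact (ReachIn.adj hadj' (hmem _ hu) (hmem _ hc)).trans h2
  rintro x y ⟨w, hw⟩
  exact key x y w hw

/-- A walk either is trivial or starts with an edge. -/
lemma walk_first_step {H : SimpleGraph V} : ∀ {x y : V} (w : H.Walk x y),
    x = y ∨ ∃ c, H.Adj x c ∧ c ∈ w.support := by
  intro x y w
  cases w with
  | nil => exact Or.inl rfl
  | cons h p => exact Or.inr ⟨_, h, by simp⟩

/-- Along a walk from inside `P` to outside `P` there is a crossing edge. -/
lemma walk_crossing {H : SimpleGraph V} {P : V → Prop} :
    ∀ {x y : V} (w : H.Walk x y), P x → ¬ P y →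
    ∃ c d, H.Adj c d ∧ P c ∧ ¬ P d ∧ c ∈ w.support ∧ d ∈ w.support := by
  intro x y w
  induction w with
  | nil => intro h h'; exact absurd h h'
  | @cons u c y h p ih =>
    intro hu hy
    by_cases hc : P c
    · obtain ⟨c', d', h1, h2, h3, h4, h5⟩ := ih hc hy
      exact ⟨c', d', h1, h2, h3, by simp [h4], by simp [h5]⟩
    · exact ⟨u, c, h, hu, hc, by simp, by simp⟩

/-- WConn glueing: attach a set each of whose elements reaches the core. -/
lemma WConn.glue {H : SimpleGraph V} {s0 s1 : Set V} (h0 : WConn H s0)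
    (hr : ∀ o ∈ s1, ∃ c ∈ s0, ReachIn H (s0 ∪ s1) o c) : WConn H (s0 ∪ s1) := by
  obtain ⟨⟨w0, hw0⟩, h0r⟩ := h0
  have key : ∀ z ∈ s0 ∪ s1, ∃ c ∈ s0, ReachIn H (s0 ∪ s1) z c := by
    intro z hz
    rcases hz with hz | hz
    · exact ⟨z, hz, ReachIn.refl (Or.inl hz)⟩
    · exact hr z hz
  refine ⟨⟨w0, Or.inl hw0⟩, fun x hx y hy => ?_⟩
  obtain ⟨c, hc, hrc⟩ := key x hx
  obtain ⟨d, hd, hrd⟩ := key y hy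
  exact (hrc.trans ((h0r c hc d hd).mono Set.subset_union_left)).trans hrd.symm

lemma WConn.union {H : SimpleGraph V} {s t : Set V} (hs : WConn H s) (ht : WConn H t)
    (hst : (s ∩ t).Nonempty) : WConn H (s ∪ t) := by
  obtain ⟨z, hzs, hzt⟩ := hst
  exact hs.glue (fun o ho => ⟨z, hzs, ((ht.2 o ho z hzt).mono Set.subset_union_right)⟩)

/-- Combining: `H'` is `H` plus (at most) the extra edge `xy`, which can be detoured through `t`. -/
lemma WConn.combine {H H' : SimpleGraph V} {s t : Set V} {x y : V}
    (hadj : ∀ c d, H'.Adj c d → H.Adj c d ∨ (c = x ∧ d = y) ∨ (c = y ∧ d = x))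
    (hs : WConn H' s) (ht : WConn H t) (hx : x ∈ t) (hy : y ∈ t)
    (hst : (s ∩ t).Nonempty) : WConn H (s ∪ t) := by
  have hdet : ReachIn H (s ∪ t) x y :=
    (ht.2 x hx y hy).mono Set.subset_union_right
  have hmain : ∀ p ∈ s, ∀ q ∈ s, ReachIn H (s ∪ t) p q := by
    intro p hp q hq
    obtain ⟨w, hw⟩ := hs.2 p hp q hq
    clear hp hq
    induction w with
    | nil => exact ReachIn.refl (Or.inl (hw _ (by simp)))
    | @cons u c q h p' ih =>
      have hu : u ∈ s := hw u (by simp)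
      have hc : c ∈ s := hw c (by simp)
      have h2 : ReachIn H (s ∪ t) c q := ih (fun z hz => hw z (by simp [hz]))
      rcases hadj u c h with h' | ⟨rfl, rfl⟩ | ⟨rfl, rfl⟩
      · exact (ReachIn.adj h' (Or.inl hu) (Or.inl hc)).trans h2
      · exact hdet.trans h2
      · exact hdet.symm.trans h2
  obtain ⟨z, hzs, hzt⟩ := hst
  refine ⟨⟨z, Or.inl hzs⟩, fun p hp q hq => ?_⟩
  have hz' : ∀ q' ∈ s ∪ t, ReachIn H (s ∪ t) z q' := by
    intro q' hq'
    rcases hq' with hq' | hq'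
    · exact hmain z hzs q' hq'
    · exact (ht.2 z hzt q' hq').mono Set.subset_union_right
  exact (hz' p hp).symm.trans (hz' q hq)

/-- `WConn` is equivalent to connectivity of the induced subgraph. -/
lemma wconn_iff_induce_connected {H : SimpleGraph V} {s : Set V} :
    (H.induce s).Connected ↔ WConn H s := by
  constructor
  · rintro hc
    have hne : s.Nonempty := by
      obtain ⟨⟨z, hz⟩⟩ := hc.nonempty
      exact ⟨z, hz⟩
    refine ⟨hne, fun x hx y hy => ?_⟩
    obtain ⟨w⟩ := hc.preconnected ⟨x, hx⟩ ⟨y, hy⟩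
    have : ∀ (p q : s) (w : (H.induce s).Walk p q), ReachIn H s p q := by
      intro p q w
      induction w with
      | nil => exact ReachIn.refl (Subtype.mem _)
      | @cons u c q h p' ih =>
        exact (ReachIn.adj (show H.Adj ↑u ↑c from h) (Subtype.mem _) (Subtype.mem _)).trans ih
    exact this ⟨x, hx⟩ ⟨y, hy⟩ w
  · rintro ⟨hne, hr⟩
    rw [connected_iff]
    constructor
    · have key : ∀ x y (w : H.Walk x y), (∀ z ∈ w.support, z ∈ s) →
          ∀ (hx : x ∈ s) (hy : y ∈ s), (H.induce s).Reachable ⟨x, hx⟩ ⟨y, hy⟩ := by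
        intro x y w
        induction w with
        | nil => exact fun _ _ _ => Reachable.refl _
        | @cons u c v hstep p ih =>
          intro hw hx hy
          have hc : c ∈ s := hw c (by simp)
          have step : (H.induce s).Adj ⟨u, hx⟩ ⟨c, hc⟩ := hstep
          exact step.reachable.trans (ih (fun z hz => hw z (by simp [hz])) hc hy)
      rintro ⟨x, hx⟩ ⟨y, hy⟩
      obtain ⟨w, hw⟩ := hr x hx y hy
      exact key x y w hw hx hy
    · obtain ⟨z, hz⟩ := hne
      exact ⟨⟨z, hz⟩⟩

end Infra


section Basics
variable {V : Type*} [Fintype V] [DecidableEq V] {G : SimpleGraph V} [DecidableRel G.Adj]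

lemma exists_not_mem_of_small (S : Finset V) (h : S.card < Fintype.card V) :
    ∃ z, z ∉ S := by
  by_contra hno
  push_neg at hno
  have hsub : (Finset.univ : Finset V) ⊆ S := fun z _ => hno z
  have := Finset.card_le_card hsub
  rw [Finset.card_univ] at this
  omega

lemma min_degree_two (hW : ∀ u : V, WConn G {z | z ≠ u}) (hn3 : 3 ≤ Fintype.card V) (v : V) :
    2 ≤ G.degree v := by
  by_contra hlt
  push_neg at hlt
  have hone : ∀ a ∈ G.neighborFinset v, ∀ b ∈ G.neighborFinset v, a = b :=
    Finset.card_le_one.mp (by unfold SimpleGraph.degree at hlt; omega)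
  by_cases hnb : ∃ c, G.Adj v c
  · obtain ⟨c, hc⟩ := hnb
    have hcard : ({v, c} : Finset V).card ≤ 2 := le_trans (Finset.card_insert_le _ _) (by simp)
    obtain ⟨z, hz⟩ := exists_not_mem_of_small {v, c} (by omega)
    simp only [Finset.mem_insert, Finset.mem_singleton, not_or] at hz
    have hvne : v ≠ c := hc.ne
    obtain ⟨w, hw⟩ := (hW c).2 v hvne z hz.2
    rcases walk_first_step w with rfl | ⟨c', hc', hc's⟩
    · exact hz.1 rfl
    · have : c' = c := hone c' (by simp [SimpleGraph.mem_neighborFinset, hc']) c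
        (by simp [SimpleGraph.mem_neighborFinset, hc])
      exact (hw c' hc's) this
  · push_neg at hnb
    haveI : Nontrivial V := Fintype.one_lt_card_iff_nontrivial.mp (by omega)
    obtain ⟨w1, hw1⟩ := exists_ne v
    have hcard : ({v, w1} : Finset V).card ≤ 2 := le_trans (Finset.card_insert_le _ _) (by simp)
    obtain ⟨z, hz⟩ := exists_not_mem_of_small {v, w1} (by omega)
    simp only [Finset.mem_insert, Finset.mem_singleton, not_or] at hz
    obtain ⟨w, hw⟩ := (hW w1).2 v (Ne.symm hw1) z hz.2
    rcases walk_first_step w with rfl | ⟨c', hc', _⟩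
    · exact hz.1 rfl
    · exact hnb c' hc'

lemma exists_nbr_ne {v : V} (hd : 3 ≤ G.degree v) (e f : V) :
    ∃ c, G.Adj v c ∧ c ≠ e ∧ c ≠ f := by
  by_contra h
  push_neg at h
  have hsub : G.neighborFinset v ⊆ {e, f} := by
    intro c hc
    rw [SimpleGraph.mem_neighborFinset] at hc
    rcases eq_or_ne c e with rfl | hne
    · simp
    · simp [h c hc hne]
  have := Finset.card_le_card hsub
  have h2 : ({e, f} : Finset V).card ≤ 2 := le_trans (Finset.card_insert_le _ _) (by simp)
  unfold SimpleGraph.degree at hd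
  omega

lemma card_ge_four (hW : ∀ u : V, WConn G {z | z ≠ u}) (hn3 : 3 ≤ Fintype.card V)
    (hdeg : ∀ u w : V, G.degree u = 2 → G.degree w = 2 → u = w) : 4 ≤ Fintype.card V := by
  by_contra h
  push_neg at h
  haveI : Nontrivial V := Fintype.one_lt_card_iff_nontrivial.mp (by omega)
  obtain ⟨v, w, hvw⟩ := exists_pair_ne V
  have hv2 : G.degree v = 2 := by
    have h1 := G.degree_lt_card_verts v
    have h2 := min_degree_two hW hn3 v
    omega
  have hw2 : G.degree w = 2 := by
    have h1 := G.degree_lt_card_verts w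
    have h2 := min_degree_two hW hn3 w
    omega
  exact hvw (hdeg v w hv2 hw2)

/-- A fragment: a set of vertices, none of degree 2, whose neighbourhood outside itself
consists of at most two vertices `p, q`, and missing at least one further vertex. -/
def Frag (G : SimpleGraph V) [DecidableRel G.Adj] (C : Finset V) : Prop :=
  C.Nonempty ∧ (∀ c ∈ C, G.degree c ≠ 2) ∧
  ∃ p q : V, p ≠ q ∧ p ∉ C ∧ q ∉ C ∧ (∃ z, z ∉ C ∧ z ≠ p ∧ z ≠ q) ∧
    (∀ c ∈ C, ∀ w, G.Adj c w → w ∈ C ∨ w = p ∨ w = q)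

omit [Fintype V] [DecidableEq V] in
lemma class_closure {H : SimpleGraph V} {s : Set V} {a0 c w : V}
    (hc : ReachIn H s a0 c) (hadj : H.Adj c w) (hw : w ∈ s) : ReachIn H s a0 w :=
  hc.trans (ReachIn.adj hadj hc.mem_right hw)

lemma frag_exists (hdeg : ∀ u w : V, G.degree u = 2 → G.degree w = 2 → u = w)
    {x y : V} (hxy : x ≠ y) (hncut : ¬ WConn G {z | z ≠ x ∧ z ≠ y})
    (hn4 : 4 ≤ Fintype.card V) : ∃ C : Finset V, Frag G C := by
  set s : Set V := {z | z ≠ x ∧ z ≠ y} with hs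
  have hsne : s.Nonempty := by
    have hcard : ({x, y} : Finset V).card ≤ 2 := le_trans (Finset.card_insert_le _ _) (by simp)
    obtain ⟨z, hz⟩ := exists_not_mem_of_small {x, y} (by omega)
    simp only [Finset.mem_insert, Finset.mem_singleton, not_or] at hz
    exact ⟨z, hz.1, hz.2⟩
  rw [WConn, not_and] at hncut
  have hncut' := hncut hsne
  push_neg at hncut'
  obtain ⟨a0, ha0, b0, hb0, hnr⟩ := hncut'
  have mkfrag : ∀ a0 b0 : V, a0 ∈ s → b0 ∈ s → ¬ ReachIn G s a0 b0 →
      (∀ c, ReachIn G s a0 c → G.degree c ≠ 2) → ∃ C : Finset V, Frag G C := by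
    intro a0 b0 ha0 hb0 hnr hdf
    set D : Set V := {z | ReachIn G s a0 z} with hD
    refine ⟨(Set.toFinite D).toFinset, ?_, ?_, x, y, hxy, ?_, ?_, ⟨b0, ?_, hb0.1, hb0.2⟩, ?_⟩
    · exact ⟨a0, by simp [Set.Finite.mem_toFinset, hD, ReachIn.refl ha0]⟩
    · intro c hc
      rw [Set.Finite.mem_toFinset] at hc
      exact hdf c hc
    · rw [Set.Finite.mem_toFinset]
      intro hc
      exact (hc.mem_right : x ∈ s).1 rfl
    · rw [Set.Finite.mem_toFinset]
      intro hc
      exact (hc.mem_right : y ∈ s).2 rfl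
    · rw [Set.Finite.mem_toFinset]
      intro hc
      exact hnr hc
    · intro c hc w hadj
      rw [Set.Finite.mem_toFinset] at hc
      by_cases hw : w ∈ s
      · exact Or.inl (by rw [Set.Finite.mem_toFinset]; exact class_closure hc hadj hw)
      · rw [hs] at hw
        simp only [Set.mem_setOf_eq, not_and_or, not_not] at hw
        rcases hw with rfl | rfl
        · exact Or.inr (Or.inl rfl)
        · exact Or.inr (Or.inr rfl)
  by_cases hd2 : ∃ c, ReachIn G s a0 c ∧ G.degree c = 2
  · obtain ⟨c0, hc0r, hc0d⟩ := hd2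
    refine mkfrag b0 a0 hb0 ha0 (fun h => hnr h.symm) ?_
    intro c hcr hcd2
    have : c = c0 := hdeg c c0 hcd2 hc0d
    subst this
    exact hnr (hc0r.trans hcr.symm)
  · push_neg at hd2
    exact mkfrag a0 b0 ha0 hb0 hnr hd2

end Basics

section Main
variable {V : Type*} [Fintype V] [DecidableEq V] {G : SimpleGraph V} [DecidableRel G.Adj]

omit [Fintype V] [DecidableEq V] [DecidableRel G.Adj] in
/-- If `s` minus `a` is connected and `a` has a neighbour in `s` other than `b`,
then deleting the edge `ab` keeps `s` connected. -/
lemma bridge {H : SimpleGraph V} {s : Set V} {a b : V}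
    (ha : a ∈ s) (hcon : WConn H (s \ {a}))
    (hc : ∃ c, c ∈ s ∧ c ≠ a ∧ c ≠ b ∧ H.Adj a c) :
    WConn (H.deleteEdges {s(a, b)}) s := by
  have hdel : ∀ p q : V, ReachIn H (s \ {a}) p q →
      ReachIn (H.deleteEdges {s(a, b)}) s p q := by
    intro p q h
    refine reachIn_transfer (H' := H.deleteEdges {s(a, b)}) id
      (fun c d hcd hcs hds => Or.inr ?_) (fun z hz => hz.1) h
    rw [SimpleGraph.deleteEdges_adj]
    refine ⟨hcd, ?_⟩
    simp only [Set.mem_singleton_iff, Sym2.eq_iff]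
    rintro (⟨rfl, rfl⟩ | ⟨rfl, rfl⟩)
    · exact hcs.2 rfl
    · exact hds.2 rfl
  obtain ⟨c, hcs, hca, hcb, hadj⟩ := hc
  have hstep : ReachIn (H.deleteEdges {s(a, b)}) s a c := by
    refine ReachIn.adj ?_ ha hcs
    rw [SimpleGraph.deleteEdges_adj]
    refine ⟨hadj, ?_⟩
    simp only [Set.mem_singleton_iff, Sym2.eq_iff]
    rintro (⟨-, rfl⟩ | ⟨h1, h2⟩)
    · exact hcb rfl
    · exact hca h2
  have hkey : ∀ z ∈ s, ReachIn (H.deleteEdges {s(a, b)}) s a z := by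
    intro z hz
    by_cases hza : z = a
    · subst hza; exact ReachIn.refl hz
    · exact hstep.trans (hdel c z (hcon.2 c ⟨hcs, hca⟩ z ⟨hz, hza⟩))
  exact ⟨⟨a, ha⟩, fun p hp q hq => (hkey p hp).symm.trans (hkey q hq)⟩

omit [Fintype V] [DecidableEq V] [DecidableRel G.Adj] in
/-- Transfer reachability from `G` to `G` minus the edge `ab`, when the vertex set avoids `a`
(or avoids `b`). -/
lemma toGd {a b : V} {s' : Set V}
    (hs' : (∀ z ∈ s', z ≠ a) ∨ (∀ z ∈ s', z ≠ b)) :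
    ∀ {p q : V}, ReachIn G s' p q → ReachIn (G.deleteEdges {s(a, b)}) s' p q := by
  intro p q h
  refine reachIn_transfer (H' := G.deleteEdges {s(a, b)}) id
    (fun c d hcd hcs hds => Or.inr ?_) (fun z hz => hz) h
  rw [SimpleGraph.deleteEdges_adj]
  refine ⟨hcd, ?_⟩
  simp only [Set.mem_singleton_iff, Sym2.eq_iff]
  rcases hs' with hA | hB
  · rintro (⟨rfl, rfl⟩ | ⟨rfl, rfl⟩)
    · exact hA _ hcs rfl
    · exact hA _ hds rfl
  · rintro (⟨rfl, rfl⟩ | ⟨rfl, rfl⟩)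
    · exact hB _ hds rfl
    · exact hB _ hcs rfl

omit [Fintype V] [DecidableEq V] [DecidableRel G.Adj] in
lemma toGdW {a b : V} {s' : Set V}
    (hs' : (∀ z ∈ s', z ≠ a) ∨ (∀ z ∈ s', z ≠ b))
    (h : WConn G s') : WConn (G.deleteEdges {s(a, b)}) s' :=
  ⟨h.1, fun p hp q hq => toGd hs' (h.2 p hp q hq)⟩

lemma case1_main (hn3 : 3 ≤ Fintype.card V) (hmin : ∀ v : V, 2 ≤ G.degree v)
    (hdeg : ∀ u w : V, G.degree u = 2 → G.degree w = 2 → u = w)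
    (hcut : ∀ x y : V, x ≠ y → WConn G {z | z ≠ x ∧ z ≠ y}) :
    ∃ a b : V, G.Adj a b ∧ WConn G {z | z ≠ a ∧ z ≠ b} ∧
      ∀ u : V, u ≠ a → u ≠ b → WConn (G.deleteEdges {s(a, b)}) {z | z ≠ u} := by
  have hedge : ∃ a b : V, G.Adj a b ∧ 3 ≤ G.degree a := by
    by_cases hd2 : ∃ v, G.degree v = 2
    · obtain ⟨v, hv⟩ := hd2
      haveI : Nontrivial V := Fintype.one_lt_card_iff_nontrivial.mp (by omega)
      obtain ⟨w, hw⟩ := exists_ne v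
      have hw3 : 3 ≤ G.degree w := by
        have h2 := hmin w
        rcases Nat.lt_or_ge (G.degree w) 3 with h | h
        · exact absurd (hdeg w v (by omega) hv) hw
        · exact h
      obtain ⟨c, hc, _, _⟩ := exists_nbr_ne hw3 v v
      exact ⟨w, c, hc, hw3⟩
    · push_neg at hd2
      haveI : Nonempty V := Fintype.card_pos_iff.mp (by omega)
      obtain ⟨v⟩ := ‹Nonempty V›
      have hv3 : 3 ≤ G.degree v := by
        have := hmin v; have := hd2 v; omega
      obtain ⟨c, hc, _, _⟩ := exists_nbr_ne hv3 v v
      exact ⟨v, c, hc, hv3⟩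
  obtain ⟨a, b, hab, ha3⟩ := hedge
  refine ⟨a, b, hab, hcut a b hab.ne, ?_⟩
  intro u hua hub
  refine bridge (H := G) (s := {z | z ≠ u}) hua.symm ?_ ?_
  · have := hcut u a hua
    have hset : {z | z ≠ u ∧ z ≠ a} = {z : V | z ≠ u} \ {a} := by
      ext z; simp [and_comm]
    rwa [hset] at this
  · obtain ⟨c, hc, hcb, hcu⟩ := exists_nbr_ne ha3 b u
    exact ⟨c, hcu, hc.ne', hcb, hc⟩

end Main

section Case2
variable {V : Type*} [Fintype V] [DecidableEq V] {G : SimpleGraph V} [DecidableRel G.Adj]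

lemma case2_main (hW : ∀ u : V, WConn G {z | z ≠ u}) (hn4 : 4 ≤ Fintype.card V)
    (hmin : ∀ v : V, 2 ≤ G.degree v)
    {B : Finset V} (hB : Frag G B) (hBmin : ∀ C : Finset V, Frag G C → B.card ≤ C.card) :
    ∃ a b : V, G.Adj a b ∧ WConn G {z | z ≠ a ∧ z ≠ b} ∧
      ∀ u : V, u ≠ a → u ≠ b → WConn (G.deleteEdges {s(a, b)}) {z | z ≠ u} := by
  classical
  obtain ⟨hBne, hBdeg, x, y, hxy, hxB, hyB, ⟨z0, hz0B, hz0x, hz0y⟩, hbdry⟩ := hB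
  obtain ⟨b1, hb1⟩ := hBne
  have deg3 : ∀ c ∈ B, 3 ≤ G.degree c := by
    intro c hc; have h1 := hmin c; have h2 := hBdeg c hc; omega
  have hB2 : 2 ≤ B.card := by
    by_contra h
    push_neg at h
    have hone : ∀ u ∈ B, u = b1 := fun u hu =>
      Finset.card_le_one.mp (by omega) u hu b1 hb1
    have hsub : G.neighborFinset b1 ⊆ {x, y} := by
      intro c hc
      rw [SimpleGraph.mem_neighborFinset] at hc
      rcases hbdry b1 hb1 c hc with hcB | rfl | rfl
      · exact absurd (hone c hcB) hc.ne'
      · simp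
      · simp
    have h1 := Finset.card_le_card hsub
    have h2 : ({x, y} : Finset V).card ≤ 2 := le_trans (Finset.card_insert_le _ _) (by simp)
    have h3 := deg3 b1 hb1
    unfold SimpleGraph.degree at h3
    omega
  -- B is connected
  have hBconn : WConn G (↑B : Set V) := by
    by_contra hnc
    rw [WConn, not_and] at hnc
    have hnc' := hnc ⟨b1, hb1⟩
    push_neg at hnc'
    obtain ⟨a0, ha0, b0, hb0, hnr⟩ := hnc'
    set D : Set V := {z | ReachIn G (↑B) a0 z} with hD
    have hDB : ∀ z ∈ D, z ∈ B := fun z hz => hz.mem_right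
    have hfrag : Frag G (Set.toFinite D).toFinset := by
      refine ⟨⟨a0, ?_⟩, ?_, x, y, hxy, ?_, ?_, ⟨b0, ?_, ?_, ?_⟩, ?_⟩
      · rw [Set.Finite.mem_toFinset]; exact ReachIn.refl ha0
      · intro c hc; rw [Set.Finite.mem_toFinset] at hc; exact hBdeg c (hDB c hc)
      · rw [Set.Finite.mem_toFinset]; exact fun hc => hxB (hDB x hc)
      · rw [Set.Finite.mem_toFinset]; exact fun hc => hyB (hDB y hc)
      · rw [Set.Finite.mem_toFinset]; exact fun hc => hnr hc
      · exact fun h => hxB (h ▸ hb0)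
      · exact fun h => hyB (h ▸ hb0)
      · intro c hc w hadj
        rw [Set.Finite.mem_toFinset] at hc
        rcases hbdry c (hDB c hc) w hadj with hwB | rfl | rfl
        · exact Or.inl (by rw [Set.Finite.mem_toFinset]; exact class_closure hc hadj hwB)
        · exact Or.inr (Or.inl rfl)
        · exact Or.inr (Or.inr rfl)
    have hlt : (Set.toFinite D).toFinset.card < B.card := by
      refine Finset.card_lt_card ?_
      rw [Finset.ssubset_iff_of_subset (fun z hz => hDB z ((Set.Finite.mem_toFinset _).mp hz))]
      exact ⟨b0, hb0, by rw [Set.Finite.mem_toFinset]; exact hnr⟩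
    have := hBmin _ hfrag
    omega
  -- x and y have neighbours in B
  have hb1y : b1 ≠ y := fun h => hyB (h ▸ hb1)
  have hb1x : b1 ≠ x := fun h => hxB (h ▸ hb1)
  have hxnb : ∃ c ∈ B, G.Adj x c := by
    obtain ⟨w, hw⟩ := (hW y).2 b1 hb1y z0 hz0y
    obtain ⟨c, d, hadj, hcB, hdB, hcs, hds⟩ :=
      walk_crossing (P := fun z => z ∈ B) w hb1 hz0B
    rcases hbdry c hcB d hadj with h | rfl | rfl
    · exact absurd h hdB
    · exact ⟨c, hcB, hadj.symm⟩
    · exact absurd rfl (hw _ hds)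
  have hynb : ∃ c ∈ B, G.Adj y c := by
    obtain ⟨w, hw⟩ := (hW x).2 b1 hb1x z0 hz0x
    obtain ⟨c, d, hadj, hcB, hdB, hcs, hds⟩ :=
      walk_crossing (P := fun z => z ∈ B) w hb1 hz0B
    rcases hbdry c hcB d hadj with h | rfl | rfl
    · exact absurd h hdB
    · exact absurd rfl (hw _ hds)
    · exact ⟨c, hcB, hadj.symm⟩
  -- the auxiliary graph with the virtual edge xy
  set Ht : SimpleGraph V := G ⊔ SimpleGraph.fromEdgeSet {s(x, y)} with hHt
  have htG : ∀ {c d : V}, G.Adj c d → Ht.Adj c d := by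
    intro c d h; rw [hHt, SimpleGraph.sup_adj]; exact Or.inl h
  have htxy : Ht.Adj x y := by
    rw [hHt, SimpleGraph.sup_adj, SimpleGraph.fromEdgeSet_adj]
    exact Or.inr ⟨rfl, hxy⟩
  have htcases : ∀ c d : V, Ht.Adj c d →
      G.Adj c d ∨ (c = x ∧ d = y) ∨ (c = y ∧ d = x) := by
    intro c d h
    rw [hHt, SimpleGraph.sup_adj, SimpleGraph.fromEdgeSet_adj] at h
    rcases h with h | ⟨hmem, -⟩
    · exact Or.inl h
    · rw [Set.mem_singleton_iff, Sym2.eq_iff] at hmem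
      exact Or.inr hmem
  -- the outside
  set O : Set V := {z | z ∉ B ∧ z ≠ x ∧ z ≠ y} with hO
  have hOmem : ∀ z : V, z ∈ O ↔ (z ∉ B ∧ z ≠ x ∧ z ≠ y) := fun z => Iff.rfl
  have hz0O : z0 ∈ O := ⟨hz0B, hz0x, hz0y⟩
  -- escaping from the outside towards x (resp. y)
  have exit_gen : ∀ t u' : V, ((t = x ∧ u' = y) ∨ (t = y ∧ u' = x)) →
      ∀ o e (w : G.Walk o e), (∀ z ∈ w.support, z ≠ u') → o ∈ O → e ∈ B →
      ReachIn G (O ∪ {t}) o t := by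
    intro t u' htu o e w
    induction w with
    | nil => intro _ ho he; exact absurd he ho.1
    | @cons o c e hadj p ih =>
      intro hsupp ho he
      have hcu : c ≠ u' := hsupp c (by simp)
      by_cases hcB : c ∈ B
      · rcases hbdry c hcB o hadj.symm with h | h | h
        · exact absurd h ho.1
        · exact absurd h ho.2.1
        · exact absurd h ho.2.2
      · by_cases hct : c = t
        · subst hct
          exact ReachIn.adj hadj (Or.inl ho) (Or.inr rfl)
        · have hcO : c ∈ O := by
            rcases htu with ⟨rfl, rfl⟩ | ⟨rfl, rfl⟩
            · exact ⟨hcB, hct, hcu⟩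
            · exact ⟨hcB, hcu, hct⟩
          exact (ReachIn.adj hadj (Or.inl ho) (Or.inl hcO)).trans
            (ih (fun z hz => hsupp z (by simp [hz])) hcO he)
  have exitX : ∀ o ∈ O, ReachIn G (O ∪ {x}) o x := by
    intro o ho
    obtain ⟨w, hw⟩ := (hW y).2 o ho.2.2 b1 hb1y
    exact exit_gen x y (Or.inl ⟨rfl, rfl⟩) o b1 w (fun z hz => hw z hz) ho hb1
  have exitY : ∀ o ∈ O, ReachIn G (O ∪ {y}) o y := by
    intro o ho
    obtain ⟨w, hw⟩ := (hW x).2 o ho.2.1 b1 hb1x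
    exact exit_gen y x (Or.inr ⟨rfl, rfl⟩) o b1 w (fun z hz => hw z hz) ho hb1
  -- the outside together with x and y is connected
  have hOxy : WConn G (O ∪ ({x, y} : Set V)) := by
    have hsub1 : O ∪ ({x} : Set V) ⊆ O ∪ ({x, y} : Set V) := by
      rintro z (hz | hz)
      · exact Or.inl hz
      · exact Or.inr (Or.inl hz)
    have hsub2 : O ∪ ({y} : Set V) ⊆ O ∪ ({x, y} : Set V) := by
      rintro z (hz | hz)
      · exact Or.inl hz
      · exact Or.inr (Or.inr hz)
    have hreachx : ∀ z ∈ O ∪ ({x, y} : Set V), ReachIn G (O ∪ ({x, y} : Set V)) z x := by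
      rintro z (hzO | hzx | hzy)
      · exact (exitX z hzO).mono hsub1
      · subst hzx
        exact ReachIn.refl (Or.inr (Or.inl rfl))
      · rw [Set.mem_singleton_iff] at hzy
        subst hzy
        exact ((exitY z0 hz0O).symm.mono hsub2).trans ((exitX z0 hz0O).mono hsub1)
    exact ⟨⟨z0, Or.inl hz0O⟩, fun p hp q hq => (hreachx p hp).trans (hreachx q hq).symm⟩
  -- escaping while avoiding a vertex u' of the outside
  have firstxy : ∀ u' : V, ∀ o e (w : G.Walk o e), (∀ z ∈ w.support, z ≠ u') →
      o ∈ O → (e = x ∨ e = y) →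
      (ReachIn G ((O \ {u'}) ∪ {x}) o x ∨ ReachIn G ((O \ {u'}) ∪ {y}) o y) := by
    intro u' o e w
    induction w with
    | nil =>
      intro _ ho he
      rcases he with rfl | rfl
      · exact absurd rfl ho.2.1
      · exact absurd rfl ho.2.2
    | @cons o c e hadj p ih =>
      intro hsupp ho he
      have hou : o ≠ u' := hsupp o (by simp)
      have hcu : c ≠ u' := hsupp c (by simp)
      have hoD : o ∈ (O \ {u'}) := ⟨ho, hou⟩
      by_cases hcB : c ∈ B
      · rcases hbdry c hcB o hadj.symm with h | h | h
        · exact absurd h ho.1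
        · exact absurd h ho.2.1
        · exact absurd h ho.2.2
      · by_cases hcx : c = x
        · subst hcx
          exact Or.inl (ReachIn.adj hadj (Or.inl hoD) (Or.inr rfl))
        · by_cases hcy : c = y
          · subst hcy
            exact Or.inr (ReachIn.adj hadj (Or.inl hoD) (Or.inr rfl))
          · have hcO : c ∈ O := ⟨hcB, hcx, hcy⟩
            have hcD : c ∈ (O \ {u'}) := ⟨hcO, hcu⟩
            rcases ih (fun z hz => hsupp z (by simp [hz])) hcO he with h | h
            · exact Or.inl ((ReachIn.adj hadj (Or.inl hoD) (Or.inl hcD)).trans h)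
            · exact Or.inr ((ReachIn.adj hadj (Or.inl hoD) (Or.inl hcD)).trans h)

  -- the key lemma: the fragment together with x,y (and the virtual edge) is 3-connected
  have K3 : ∀ p q : V, WConn Ht {z | (z ∈ B ∨ z = x ∨ z = y) ∧ z ≠ p ∧ z ≠ q} := by
    intro p q
    set s : Set V := {z | (z ∈ B ∨ z = x ∨ z = y) ∧ z ≠ p ∧ z ≠ q} with hsdef
    have hsmem : ∀ z : V, z ∈ s ↔ ((z ∈ B ∨ z = x ∨ z = y) ∧ z ≠ p ∧ z ≠ q) :=
      fun z => Iff.rfl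
    have hsne : s.Nonempty := by
      by_cases h1 : x ≠ p ∧ x ≠ q
      · exact ⟨x, Or.inr (Or.inl rfl), h1⟩
      by_cases h2 : y ≠ p ∧ y ≠ q
      · exact ⟨y, Or.inr (Or.inr rfl), h2⟩
      push_neg at h1 h2
      by_cases hxp : x = p
      · by_cases hyq : y = q
        · refine ⟨b1, Or.inl hb1, ?_, ?_⟩
          · rw [← hxp]; exact hb1x
          · rw [← hyq]; exact hb1y
        · have hyp : y = p := by
            by_cases h : y = p
            · exact h
            · exact absurd (h2 h) hyq
          exact absurd (hyp.trans hxp.symm) hxy.symm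
      · have hxq : x = q := h1 hxp
        by_cases hyp : y = p
        · refine ⟨b1, Or.inl hb1, ?_, ?_⟩
          · rw [← hyp]; exact hb1y
          · rw [← hxq]; exact hb1x
        · exact absurd ((h2 hyp).trans hxq.symm) hxy.symm
    by_cases hpqB : p ∉ B ∧ q ∉ B
    · -- no cut vertex inside B : direct connectivity
      have hBsub : (↑B : Set V) ⊆ s := fun z hz =>
        ⟨Or.inl hz, fun h => hpqB.1 (h ▸ hz), fun h => hpqB.2 (h ▸ hz)⟩
      have hGHt : ∀ {p' q' : V}, ReachIn G (↑B) p' q' → ReachIn Ht s p' q' :=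
        fun h => reachIn_transfer id (fun c d hcd _ _ => Or.inr (htG hcd))
          (fun z hz => hBsub hz) h
      have hreachB : ∀ z ∈ s, ∃ c ∈ B, ReachIn Ht s z c := by
        intro z hz
        rcases hz.1 with hzB | rfl | rfl
        · exact ⟨z, hzB, ReachIn.refl (hBsub hzB)⟩
        · obtain ⟨c, hcB, hadj⟩ := hxnb
          exact ⟨c, hcB, ReachIn.adj (htG hadj) hz (hBsub hcB)⟩
        · obtain ⟨c, hcB, hadj⟩ := hynb
          exact ⟨c, hcB, ReachIn.adj (htG hadj) hz (hBsub hcB)⟩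
      refine ⟨hsne, fun p' hp' q' hq' => ?_⟩
      obtain ⟨c, hcB, hrc⟩ := hreachB p' hp'
      obtain ⟨d, hdB, hrd⟩ := hreachB q' hq'
      exact (hrc.trans (hGHt (hBconn.2 c hcB d hdB))).trans hrd.symm
    · have hpqB' : p ∈ B ∨ q ∈ B := by
        rcases not_and_or.mp hpqB with h | h
        · exact Or.inl (not_not.mp h)
        · exact Or.inr (not_not.mp h)
      by_contra hno
      rw [WConn, not_and] at hno
      have hno' := hno hsne
      push_neg at hno'
      obtain ⟨a0, ha0, b0, hb0, hnr⟩ := hno'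
      have hcount : B.card + 3 ≤ Fintype.card V := by
        have hdisj : Disjoint B ({x, y, z0} : Finset V) := by
          rw [Finset.disjoint_right]
          intro z hz hzB
          simp only [Finset.mem_insert, Finset.mem_singleton] at hz
          rcases hz with rfl | rfl | rfl
          · exact hxB hzB
          · exact hyB hzB
          · exact hz0B hzB
        have hcard3 : ({x, y, z0} : Finset V).card = 3 := by
          rw [Finset.card_insert_of_notMem, Finset.card_insert_of_notMem,
            Finset.card_singleton]
          · simp only [Finset.mem_singleton]
            exact fun h => hz0y h.symm
          · simp only [Finset.mem_insert, Finset.mem_singleton, not_or]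
            exact ⟨hxy, fun h => hz0x h.symm⟩
        have hle := (B ∪ ({x, y, z0} : Finset V)).card_le_univ
        rw [Finset.card_union_of_disjoint hdisj, hcard3] at hle
        omega
      -- a reachability class avoiding x and y contradicts minimality
      have key : ∀ c0 d0 : V, c0 ∈ s → d0 ∈ s → ¬ ReachIn Ht s c0 d0 →
          ¬ ReachIn Ht s c0 x → ¬ ReachIn Ht s c0 y → False := by
        intro c0 d0 hc0 hd0 hnr' hnx hny
        set D : Set V := {z | ReachIn Ht s c0 z} with hD
        have hDs : ∀ z ∈ D, z ∈ s := fun z hz => hz.mem_right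
        have hDB : ∀ z ∈ D, z ∈ B := by
          intro z hz
          rcases (hDs z hz).1 with h | rfl | rfl
          · exact h
          · exact absurd hz hnx
          · exact absurd hz hny
        have hbd : ∀ c ∈ D, ∀ w, G.Adj c w → w ∈ D ∨ w = p ∨ w = q := by
          intro c hc w hadj
          by_cases hws : w ∈ s
          · exact Or.inl (class_closure hc (htG hadj) hws)
          · have hw3 := hbdry c (hDB c hc) w hadj
            have hnpq : ¬(w ≠ p ∧ w ≠ q) := fun hc2 => hws ⟨hw3, hc2⟩
            rcases not_and_or.mp hnpq with h | h
            · exact Or.inr (Or.inl (not_not.mp h))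
            · exact Or.inr (Or.inr (not_not.mp h))
        obtain ⟨p1, q1, hp1q1, hp1D, hq1D, hbd1⟩ :
            ∃ p1 q1 : V, p1 ≠ q1 ∧ p1 ∉ D ∧ q1 ∉ D ∧
              (∀ c ∈ D, ∀ w, G.Adj c w → w ∈ D ∨ w = p1 ∨ w = q1) := by
          by_cases hpq : p = q
          · subst hpq
            by_cases hpx : p = x
            · refine ⟨p, y, hpx ▸ hxy, fun h => (hDs p h).2.1 rfl, hny, ?_⟩
              intro c hc w hadj
              rcases hbd c hc w hadj with h | h | h
              · exact Or.inl h
              · exact Or.inr (Or.inl h)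
              · exact Or.inr (Or.inl h)
            · refine ⟨p, x, fun h => hpx h, fun h => (hDs p h).2.1 rfl, hnx, ?_⟩
              intro c hc w hadj
              rcases hbd c hc w hadj with h | h | h
              · exact Or.inl h
              · exact Or.inr (Or.inl h)
              · exact Or.inr (Or.inl h)
          · exact ⟨p, q, hpq, fun h => (hDs p h).2.1 rfl, fun h => (hDs q h).2.2 rfl, hbd⟩
        set Df := (Set.toFinite D).toFinset with hDf
        have hDfD : ∀ z, z ∈ Df ↔ z ∈ D := fun z => Set.Finite.mem_toFinset _
        have hDfB : Df ⊆ B := fun z hz => hDB z ((hDfD z).mp hz)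
        have he0 : ∃ e0, e0 ∈ B ∧ e0 ∉ Df := by
          rcases hpqB' with h | h
          · exact ⟨p, h, fun hc => (hDs p ((hDfD p).mp hc)).2.1 rfl⟩
          · exact ⟨q, h, fun hc => (hDs q ((hDfD q).mp hc)).2.2 rfl⟩
        obtain ⟨e0, he0B, he0D⟩ := he0
        have hltB : Df.card < B.card :=
          Finset.card_lt_card ((Finset.ssubset_iff_of_subset hDfB).mpr ⟨e0, he0B, he0D⟩)
        have hwitcard : (Df ∪ {p1, q1}).card < Fintype.card V := by
          have h1 := Finset.card_union_le Df ({p1, q1} : Finset V)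
          have h2 : ({p1, q1} : Finset V).card ≤ 2 :=
            le_trans (Finset.card_insert_le _ _) (by simp)
          omega
        obtain ⟨zw, hzw⟩ := exists_not_mem_of_small _ hwitcard
        simp only [Finset.mem_union, Finset.mem_insert, Finset.mem_singleton, not_or] at hzw
        have hfrag : Frag G Df := by
          refine ⟨⟨c0, (hDfD c0).mpr (ReachIn.refl hc0)⟩, ?_, p1, q1, hp1q1, ?_, ?_,
            ⟨zw, hzw.1, hzw.2.1, hzw.2.2⟩, ?_⟩
          · intro c hc; exact hBdeg c (hDfB hc)
          · exact fun h => hp1D ((hDfD p1).mp h)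
          · exact fun h => hq1D ((hDfD q1).mp h)
          · intro c hc w hadj
            rcases hbd1 c ((hDfD c).mp hc) w hadj with h | h | h
            · exact Or.inl ((hDfD w).mpr h)
            · exact Or.inr (Or.inl h)
            · exact Or.inr (Or.inr h)
        have := hBmin Df hfrag
        omega
      by_cases hx0 : ReachIn Ht s a0 x ∨ ReachIn Ht s a0 y
      · have hnb0x : ¬ ReachIn Ht s b0 x := by
          intro h
          rcases hx0 with h' | h'
          · exact hnr (h'.trans h.symm)
          · exact hnr ((h'.trans (ReachIn.adj htxy.symm h'.mem_right h.mem_right)).trans h.symm)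
        have hnb0y : ¬ ReachIn Ht s b0 y := by
          intro h
          rcases hx0 with h' | h'
          · exact hnr ((h'.trans (ReachIn.adj htxy h'.mem_right h.mem_right)).trans h.symm)
          · exact hnr (h'.trans h.symm)
        exact key b0 a0 hb0 ha0 (fun h => hnr h.symm) hnb0x hnb0y
      · push_neg at hx0
        exact key a0 b0 ha0 hb0 hnr hx0.1 hx0.2

  -- choose an edge inside B
  obtain ⟨b2, hb2, b3, hb3, hb23⟩ := Finset.one_lt_card.mp (by omega : 1 < B.card)
  obtain ⟨wbc, hwbc⟩ := hBconn.2 b2 hb2 b3 hb3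
  obtain ⟨b', hab, hbs⟩ : ∃ c, G.Adj b2 c ∧ c ∈ wbc.support := by
    rcases walk_first_step wbc with h | h
    · exact absurd h hb23
    · exact h
  set a := b2 with ha_def
  set b := b' with hb_def
  have haB : a ∈ B := hb2
  have hbB : b ∈ B := hwbc b hbs
  have ha3 : 3 ≤ G.degree a := deg3 a haB
  have hax : a ≠ x := fun h => hxB (h ▸ haB)
  have hay : a ≠ y := fun h => hyB (h ▸ haB)
  have hbx : b ≠ x := fun h => hxB (h ▸ hbB)
  have hby : b ≠ y := fun h => hyB (h ▸ hbB)
  have hxa : x ≠ a := hax.symm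
  have hya : y ≠ a := hay.symm
  have hxb : x ≠ b := hbx.symm
  have hyb : y ≠ b := hby.symm
  refine ⟨a, b, hab, ?_, ?_⟩
  · -- G minus the two vertices a b is connected
    have hcomb := WConn.combine (H := G) (H' := Ht)
      (s := {z | (z ∈ B ∨ z = x ∨ z = y) ∧ z ≠ a ∧ z ≠ b})
      (t := O ∪ ({x, y} : Set V)) htcases (K3 a b) hOxy
      (Or.inr (Or.inl rfl)) (Or.inr (Or.inr rfl))
      ⟨x, ⟨Or.inr (Or.inl rfl), hxa, hxb⟩, Or.inr (Or.inl rfl)⟩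
    have hset : {z : V | z ≠ a ∧ z ≠ b} =
        {z | (z ∈ B ∨ z = x ∨ z = y) ∧ z ≠ a ∧ z ≠ b} ∪ (O ∪ ({x, y} : Set V)) := by
      ext z
      constructor
      · intro hz
        by_cases hzB : z ∈ B
        · exact Or.inl ⟨Or.inl hzB, hz⟩
        · by_cases hzx : z = x
          · exact Or.inr (Or.inr (Or.inl hzx))
          · by_cases hzy : z = y
            · exact Or.inr (Or.inr (Or.inr hzy))
            · exact Or.inr (Or.inl ⟨hzB, hzx, hzy⟩)
      · rintro (⟨-, hz⟩ | hzO | hzx | hzy)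
        · exact hz
        · exact ⟨fun h => hzO.1 (h ▸ haB), fun h => hzO.1 (h ▸ hbB)⟩
        · subst hzx; exact ⟨hxa, hxb⟩
        · rw [Set.mem_singleton_iff] at hzy
          subst hzy; exact ⟨hya, hyb⟩
    rw [hset]
    exact hcomb
  · -- deleting the edge keeps 2-connectivity
    intro u hua hub
    have hau : a ≠ u := hua.symm
    -- useful: transfer of adjacency for the edge-deleted graphs
    have hadjDel : ∀ c d : V, (Ht.deleteEdges {s(a, b)}).Adj c d →
        (G.deleteEdges {s(a, b)}).Adj c d ∨ (c = x ∧ d = y) ∨ (c = y ∧ d = x) := by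
      intro c d hcd
      rw [SimpleGraph.deleteEdges_adj] at hcd
      rcases htcases c d hcd.1 with h | h | h
      · exact Or.inl (by rw [SimpleGraph.deleteEdges_adj]; exact ⟨h, hcd.2⟩)
      · exact Or.inr (Or.inl h)
      · exact Or.inr (Or.inr h)
    -- core with one of x,y removed, as a Gd-connected set
    have hcore : ∀ t' : V, t' = x ∨ t' = y →
        WConn (G.deleteEdges {s(a, b)}) {z | (z ∈ B ∨ z = x ∨ z = y) ∧ z ≠ t'} := by
      intro t' ht'
      have hat' : a ≠ t' := by rcases ht' with rfl | rfl; exact hax; exact hay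
      have hbr : WConn (Ht.deleteEdges {s(a, b)}) {z | (z ∈ B ∨ z = x ∨ z = y) ∧ z ≠ t'} := by
        refine bridge (H := Ht) ⟨Or.inl haB, hat'⟩ ?_ ?_
        · have hseteq : {z : V | (z ∈ B ∨ z = x ∨ z = y) ∧ z ≠ t'} \ {a} =
              {z | (z ∈ B ∨ z = x ∨ z = y) ∧ z ≠ t' ∧ z ≠ a} := by
            ext z
            simp only [Set.mem_diff, Set.mem_setOf_eq, Set.mem_singleton_iff]
            exact ⟨fun h => ⟨h.1.1, h.1.2, h.2⟩, fun h => ⟨⟨h.1, h.2.1⟩, h.2.2⟩⟩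
          rw [hseteq]
          exact K3 t' a
        · obtain ⟨c, hc, hcb, hct⟩ := exists_nbr_ne ha3 b t'
          exact ⟨c, ⟨hbdry a haB c hc, hct⟩, hc.ne', hcb, htG hc⟩
      refine ⟨hbr.1, fun p' hp' q' hq' => ?_⟩
      refine reachIn_transfer id (fun c d hcd hcs hds => Or.inr ?_) (fun z hz => hz)
        (hbr.2 p' hp' q' hq')
      rw [SimpleGraph.deleteEdges_adj] at hcd ⊢
      rcases htcases c d hcd.1 with h | ⟨hcx, hdy⟩ | ⟨hcy, hdx⟩
      · exact ⟨h, hcd.2⟩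
      · rcases ht' with rfl | rfl
        · exact absurd hcx hcs.2
        · exact absurd hdy hds.2
      · rcases ht' with rfl | rfl
        · exact absurd hdx hds.2
        · exact absurd hcy hcs.2
    by_cases huB : u ∈ B
    · -- u inside B : use bridge on B ∪ {x,y} minus u, and attach the outside
      have hxu : x ≠ u := fun h => (h ▸ hxB) huB
      have hyu : y ≠ u := fun h => (h ▸ hyB) huB
      have hbr : WConn (Ht.deleteEdges {s(a, b)}) {z | (z ∈ B ∨ z = x ∨ z = y) ∧ z ≠ u} := by
        refine bridge (H := Ht) ⟨Or.inl haB, hau⟩ ?_ ?_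
        · have hseteq : {z : V | (z ∈ B ∨ z = x ∨ z = y) ∧ z ≠ u} \ {a} =
              {z | (z ∈ B ∨ z = x ∨ z = y) ∧ z ≠ u ∧ z ≠ a} := by
            ext z
            simp only [Set.mem_diff, Set.mem_setOf_eq, Set.mem_singleton_iff]
            exact ⟨fun h => ⟨h.1.1, h.1.2, h.2⟩, fun h => ⟨⟨h.1, h.2.1⟩, h.2.2⟩⟩
          rw [hseteq]
          exact K3 u a
        · obtain ⟨c, hc, hcb, hcu⟩ := exists_nbr_ne ha3 b u
          exact ⟨c, ⟨hbdry a haB c hc, hcu⟩, hc.ne', hcb, htG hc⟩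
      have hOxyGd : WConn (G.deleteEdges {s(a, b)}) (O ∪ ({x, y} : Set V)) := by
        refine toGdW (Or.inl ?_) hOxy
        rintro z (hz | hz | hz)
        · exact fun h => hz.1 (h ▸ haB)
        · exact fun h => hxa (hz ▸ h)
        · rw [Set.mem_singleton_iff] at hz
          exact fun h => hya (hz ▸ h)
      have hcomb := WConn.combine (H := G.deleteEdges {s(a, b)})
        (H' := Ht.deleteEdges {s(a, b)})
        (s := {z | (z ∈ B ∨ z = x ∨ z = y) ∧ z ≠ u}) (t := O ∪ ({x, y} : Set V))
        hadjDel hbr hOxyGd (Or.inr (Or.inl rfl)) (Or.inr (Or.inr rfl))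
        ⟨x, ⟨Or.inr (Or.inl rfl), hxu⟩, Or.inr (Or.inl rfl)⟩
      have hset : {z : V | z ≠ u} =
          {z | (z ∈ B ∨ z = x ∨ z = y) ∧ z ≠ u} ∪ (O ∪ ({x, y} : Set V)) := by
        ext z
        constructor
        · intro hz
          by_cases hzB : z ∈ B
          · exact Or.inl ⟨Or.inl hzB, hz⟩
          · by_cases hzx : z = x
            · exact Or.inr (Or.inr (Or.inl hzx))
            · by_cases hzy : z = y
              · exact Or.inr (Or.inr (Or.inr hzy))
              · exact Or.inr (Or.inl ⟨hzB, hzx, hzy⟩)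
        · rintro (⟨-, hz⟩ | hzO | hzx | hzy)
          · exact hz
          · exact fun h => hzO.1 (h ▸ huB)
          · subst hzx; exact hxu
          · rw [Set.mem_singleton_iff] at hzy
            subst hzy; exact hyu
      rw [hset]
      exact hcomb
    · by_cases hux : u = x
      · rw [hux]
        have hglue := WConn.glue (H := G.deleteEdges {s(a, b)})
          (s0 := {z | (z ∈ B ∨ z = x ∨ z = y) ∧ z ≠ x}) (s1 := O)
          (hcore x (Or.inl rfl)) ?_
        · have hset : {z : V | z ≠ x} =
              {z | (z ∈ B ∨ z = x ∨ z = y) ∧ z ≠ x} ∪ O := by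
            ext z
            constructor
            · intro hz
              by_cases hzB : z ∈ B
              · exact Or.inl ⟨Or.inl hzB, hz⟩
              · by_cases hzy : z = y
                · exact Or.inl ⟨Or.inr (Or.inr hzy), hz⟩
                · exact Or.inr ⟨hzB, hz, hzy⟩
            · rintro (⟨-, hz⟩ | hzO)
              · exact hz
              · exact hzO.2.1
          rw [hset]
          exact hglue
        · intro o ho
          refine ⟨y, ⟨Or.inr (Or.inr rfl), hxy.symm⟩, ?_⟩
          have hr := toGd (a := a) (b := b) (Or.inl ?_) (exitY o ho)
          · refine hr.mono ?_
            rintro z (hz | hz)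
            · exact Or.inr hz
            · rw [Set.mem_singleton_iff] at hz
              exact Or.inl ⟨Or.inr (Or.inr hz), hz ▸ hxy.symm⟩
          · rintro z (hz | hz)
            · exact fun h => hz.1 (h ▸ haB)
            · rw [Set.mem_singleton_iff] at hz
              exact hz ▸ hya
      · by_cases huy : u = y
        · rw [huy]
          have hglue := WConn.glue (H := G.deleteEdges {s(a, b)})
            (s0 := {z | (z ∈ B ∨ z = x ∨ z = y) ∧ z ≠ y}) (s1 := O)
            (hcore y (Or.inr rfl)) ?_
          · have hset : {z : V | z ≠ y} =
                {z | (z ∈ B ∨ z = x ∨ z = y) ∧ z ≠ y} ∪ O := by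
              ext z
              constructor
              · intro hz
                by_cases hzB : z ∈ B
                · exact Or.inl ⟨Or.inl hzB, hz⟩
                · by_cases hzx : z = x
                  · exact Or.inl ⟨Or.inr (Or.inl hzx), hz⟩
                  · exact Or.inr ⟨hzB, hzx, hz⟩
              · rintro (⟨-, hz⟩ | hzO)
                · exact hz
                · exact hzO.2.2
            rw [hset]
            exact hglue
          · intro o ho
            refine ⟨x, ⟨Or.inr (Or.inl rfl), hxy⟩, ?_⟩
            have hr := toGd (a := a) (b := b) (Or.inl ?_) (exitX o ho)
            · refine hr.mono ?_
              rintro z (hz | hz)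
              · exact Or.inr hz
              · rw [Set.mem_singleton_iff] at hz
                exact Or.inl ⟨Or.inr (Or.inl hz), hz ▸ hxy⟩
            · rintro z (hz | hz)
              · exact fun h => hz.1 (h ▸ haB)
              · rw [Set.mem_singleton_iff] at hz
                exact hz ▸ hxa
        · -- u is in the outside O
          have huO : u ∈ O := ⟨huB, hux, huy⟩
          have hxu : x ≠ u := fun h => hux h.symm
          have hcoreU : WConn (G.deleteEdges {s(a, b)})
              ({z | (z ∈ B ∨ z = x ∨ z = y) ∧ z ≠ x} ∪
               {z | (z ∈ B ∨ z = x ∨ z = y) ∧ z ≠ y}) :=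
            WConn.union (hcore x (Or.inl rfl)) (hcore y (Or.inr rfl))
              ⟨a, ⟨Or.inl haB, hax⟩, ⟨Or.inl haB, hay⟩⟩
          have hglue := WConn.glue (H := G.deleteEdges {s(a, b)})
            (s1 := O \ {u}) hcoreU ?_
          · have hset : {z : V | z ≠ u} =
                ({z | (z ∈ B ∨ z = x ∨ z = y) ∧ z ≠ x} ∪
                 {z | (z ∈ B ∨ z = x ∨ z = y) ∧ z ≠ y}) ∪ (O \ {u}) := by
              ext z
              constructor
              · intro hz
                by_cases hzB : z ∈ B
                · by_cases hzx : z = x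
                  · exact Or.inl (Or.inr ⟨Or.inl hzB, hzx ▸ hxy⟩)
                  · exact Or.inl (Or.inl ⟨Or.inl hzB, hzx⟩)
                · by_cases hzx : z = x
                  · exact Or.inl (Or.inr ⟨Or.inr (Or.inl hzx), hzx ▸ hxy⟩)
                  · by_cases hzy : z = y
                    · exact Or.inl (Or.inl ⟨Or.inr (Or.inr hzy), hzy ▸ hxy.symm⟩)
                    · exact Or.inr ⟨⟨hzB, hzx, hzy⟩, hz⟩
              · rintro ((⟨hz1, -⟩ | ⟨hz1, -⟩) | hzO)
                · rcases hz1 with h | rfl | rfl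
                  · exact fun he => huB (he ▸ h)
                  · exact hxu
                  · exact fun he => huy he.symm
                · rcases hz1 with h | rfl | rfl
                  · exact fun he => huB (he ▸ h)
                  · exact hxu
                  · exact fun he => huy he.symm
                · exact hzO.2
            rw [hset]
            exact hglue
          · intro o ho
            obtain ⟨w, hw⟩ := (hW u).2 o ho.2 x hxu
            rcases firstxy u o x w (fun z hz => hw z hz) ho.1 (Or.inl rfl) with h | h
            · refine ⟨x, Or.inr ⟨Or.inr (Or.inl rfl), hxy⟩, ?_⟩
              have hr := toGd (a := a) (b := b) (Or.inl ?_) h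
              · refine hr.mono ?_
                rintro z (hz | hz)
                · exact Or.inr hz
                · rw [Set.mem_singleton_iff] at hz
                  exact Or.inl (Or.inr ⟨Or.inr (Or.inl hz), hz ▸ hxy⟩)
              · rintro z (hz | hz)
                · exact fun he => hz.1.1 (he ▸ haB)
                · rw [Set.mem_singleton_iff] at hz
                  exact hz ▸ hxa
            · refine ⟨y, Or.inl ⟨Or.inr (Or.inr rfl), hxy.symm⟩, ?_⟩
              have hr := toGd (a := a) (b := b) (Or.inl ?_) h
              · refine hr.mono ?_
                rintro z (hz | hz)
                · exact Or.inr hz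
                · rw [Set.mem_singleton_iff] at hz
                  exact Or.inl (Or.inl ⟨Or.inr (Or.inr hz), hz ▸ hxy.symm⟩)
              · rintro z (hz | hz)
                · exact fun he => hz.1.1 (he ▸ haB)
                · rw [Set.mem_singleton_iff] at hz
                  exact hz ▸ hya

end Case2

/-- Let `G` be a finite simple 2-connected graph with at most one vertex of degree 2.
Then there is an edge `e = {a,b}` such that both `G ∖ e` and `G/e` are 2-connected. -/
theorem exists_edge_delete_contract_two_connected {V : Type*} [Fintype V] [DecidableEq V]
    (G : SimpleGraph V) [DecidableRel G.Adj]
    (h2conn : TwoConnectedGraph G)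
    (hdeg : ∀ u w : V, G.degree u = 2 → G.degree w = 2 → u = w) :
    ∃ a b : V, G.Adj a b ∧
      TwoConnectedGraph (G.deleteEdges {s(a, b)}) ∧
      TwoConnectedGraph (contractEdge G a b) := by
  classical
  obtain ⟨hcard3, hconn⟩ := h2conn
  have hn3 : 3 ≤ Fintype.card V := by rwa [Nat.card_eq_fintype_card] at hcard3
  have hW : ∀ u : V, WConn G {z | z ≠ u} := fun u => wconn_iff_induce_connected.mp (hconn u)
  have hn4 : 4 ≤ Fintype.card V := card_ge_four hW hn3 hdeg
  have hmin : ∀ v : V, 2 ≤ G.degree v := min_degree_two hW hn3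
  have main : ∃ a b : V, G.Adj a b ∧ WConn G {z | z ≠ a ∧ z ≠ b} ∧
      ∀ u : V, u ≠ a → u ≠ b → WConn (G.deleteEdges {s(a, b)}) {z | z ≠ u} := by
    by_cases hcut : ∀ x y : V, x ≠ y → WConn G {z | z ≠ x ∧ z ≠ y}
    · exact case1_main hn3 hmin hdeg hcut
    · push_neg at hcut
      obtain ⟨x, y, hxy, hncut⟩ := hcut
      obtain ⟨C0, hC0⟩ := frag_exists hdeg hxy hncut hn4
      obtain ⟨B, hBmem, hBmin⟩ := Finset.exists_min_image
        (Finset.univ.filter (fun C : Finset V => Frag G C)) Finset.card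
        ⟨C0, by simp [hC0]⟩
      rw [Finset.mem_filter] at hBmem
      exact case2_main hW hn4 hmin hBmem.2 (fun C hC => hBmin C (by simp [hC]))
  obtain ⟨a, b, hab, T1, T2⟩ := main
  have hcardsub : Fintype.card {x : V // x ≠ b} = Fintype.card V - 1 := by
    rw [Fintype.card_subtype]
    rw [show (Finset.univ.filter fun x : V => x ≠ b) = Finset.univ.erase b from
      Finset.filter_ne' _ _]
    rw [Finset.card_erase_of_mem (Finset.mem_univ b), Finset.card_univ]
  haveI : Nontrivial {x : V // x ≠ b} := by
    apply Fintype.one_lt_card_iff_nontrivial.mp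
    omega
  refine ⟨a, b, hab, ⟨hcard3, ?_⟩, ⟨?_, ?_⟩⟩
  · -- the edge-deleted graph stays 2-connected
    intro u
    rw [wconn_iff_induce_connected]
    by_cases hua : u = a
    · subst hua
      exact toGdW (Or.inl (fun z hz => hz)) (hW u)
    · by_cases hub : u = b
      · subst hub
        exact toGdW (Or.inr (fun z hz => hz)) (hW u)
      · exact T2 u hua hub
  · -- cardinality for the contracted graph
    rw [Nat.card_eq_fintype_card, hcardsub]
    omega
  · -- the contracted graph stays 2-connected
    intro u
    rw [wconn_iff_induce_connected]
    set f : V → {x : V // x ≠ b} := fun z => if hz : z = b then ⟨a, hab.ne⟩ else ⟨z, hz⟩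
      with hf
    have hfv : ∀ (z : V) (hz : z ≠ b), f z = ⟨z, hz⟩ := fun z hz => dif_neg hz
    have hfb : f b = ⟨a, hab.ne⟩ := dif_pos rfl
    have hne : {x : {x : V // x ≠ b} | x ≠ u}.Nonempty := by
      obtain ⟨w, hw⟩ := exists_ne u
      exact ⟨w, hw⟩
    by_cases hu : (u : V) = a
    · refine ⟨hne, fun p hp q hq => ?_⟩
      have hpa : (p : V) ≠ a := fun h => hp (Subtype.ext (h.trans hu.symm))
      have hqa : (q : V) ≠ a := fun h => hq (Subtype.ext (h.trans hu.symm))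
      have hr := T1.2 p.val ⟨hpa, p.2⟩ q.val ⟨hqa, q.2⟩
      have htr := reachIn_transfer (H := G) (H' := contractEdge G a b)
        (s := {z | z ≠ a ∧ z ≠ b}) (t := {x : {x : V // x ≠ b} | x ≠ u}) f
        ?_ ?_ hr
      · rwa [hfv p.val p.2, hfv q.val q.2] at htr
      · intro c d hcd hcs hds
        rw [hfv c hcs.2, hfv d hds.2]
        refine Or.inr ⟨fun h => hcd.ne (congrArg Subtype.val h), Or.inl hcd⟩
      · intro z hz
        rw [hfv z hz.2]
        exact fun h => hz.1 ((congrArg Subtype.val h).trans hu)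
    · refine ⟨hne, fun p hp q hq => ?_⟩
      have hpu : (p : V) ≠ (u : V) := fun h => hp (Subtype.ext h)
      have hqu : (q : V) ≠ (u : V) := fun h => hq (Subtype.ext h)
      have hr := (hW u.val).2 p.val hpu q.val hqu
      have htr := reachIn_transfer (H := G) (H' := contractEdge G a b)
        (s := {z | z ≠ (u : V)}) (t := {x : {x : V // x ≠ b} | x ≠ u}) f
        ?_ ?_ hr
      · rwa [hfv p.val p.2, hfv q.val q.2] at htr
      · intro c d hcd hcs hds
        by_cases hcb : c = b
        · have hdb : d ≠ b := fun h => hcd.ne' (h.trans hcb.symm)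
          rw [hcb, hfb, hfv d hdb]
          by_cases hda : d = a
          · exact Or.inl (Subtype.ext hda.symm)
          · refine Or.inr ⟨fun h => hda (congrArg Subtype.val h).symm,
              Or.inr (Or.inl ⟨rfl, (hcb ▸ hcd).symm⟩)⟩
        · by_cases hdb : d = b
          · rw [hdb, hfb, hfv c hcb]
            by_cases hca : c = a
            · exact Or.inl (Subtype.ext hca)
            · refine Or.inr ⟨fun h => hca (congrArg Subtype.val h),
                Or.inr (Or.inr ⟨rfl, hdb ▸ hcd⟩)⟩
          · rw [hfv c hcb, hfv d hdb]
            exact Or.inr ⟨fun h => hcd.ne (congrArg Subtype.val h), Or.inl hcd⟩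
      · intro z hz
        by_cases hzb : z = b
        · rw [hzb, hfb]
          exact fun h => hu ((congrArg Subtype.val h).symm)
        · rw [hfv z hzb]
          exact fun h => hz (congrArg Subtype.val h)
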